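/- Let T be a bounded linear operator on a normed space X, let x ∈ X, and suppose {T^{n_k}} is a boundedly spaced subsequence of {T^n}, i.e., {n_k} is strictly increasing with sup_k (n_{k+1} − n_k) < ∞. If the sequence {T^{n_k} x} converges weakly to zero (f(T^{n_k} x) → 0 for every f ∈ X*), then the whole sequence {T^n x} converges weakly to zero (f(T^n x) → 0 for every f ∈ X*). -/
import Mathlib


/-- **Lemma 5.2.** Let `T` be a bounded linear operator on a normed space `X`, let
`x ∈ X`, and suppose `{T^{n_k}}` is a boundedly spaced subsequence of `{T^n}`, i.e.
`{n_k}` is strictly increasing with `sup_k (n_{k+1} - n_k) < ∞`. If `{T^{n_k} x}`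
converges weakly to zero, then `{T^n x}` converges weakly to zero. -/
theorem weak_stability_along_boundedly_spaced_subsequence {𝕜 X : Type*} [RCLike 𝕜]
    [NormedAddCommGroup X] [NormedSpace 𝕜 X] (T : X →L[𝕜] X) (x : X)
    (n : ℕ → ℕ) (hmono : StrictMono n) (hbdd : ∃ M : ℕ, ∀ k, n (k + 1) - n k ≤ M)
    (h : ∀ f : X →L[𝕜] 𝕜,
      Filter.Tendsto (fun k => f ((T ^ n k) x)) Filter.atTop (nhds 0)) :
    ∀ f : X →L[𝕜] 𝕜,
      Filter.Tendsto (fun m => f ((T ^ m) x)) Filter.atTop (nhds 0) := by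
  intro f
  obtain ⟨M, hM⟩ := hbdd
  rw [Metric.tendsto_atTop]
  intro ε hε
  have hg : ∀ j : ℕ, ∃ K, ∀ k ≥ K, ‖f ((T ^ j) ((T ^ n k) x))‖ < ε := by
    intro j
    have := h (f.comp (T ^ j))
    rw [Metric.tendsto_atTop] at this
    obtain ⟨K, hK⟩ := this ε hε
    exact ⟨K, fun k hk => by simpa [dist_eq_norm] using hK k hk⟩
  choose K hK using hg
  set Kmax := Finset.sup (Finset.range (M + 1)) K with hKmax
  refine ⟨n Kmax, fun m hm => ?_⟩
  have hKm : Kmax ≤ m := le_trans hmono.le_apply hm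
  set k := Nat.findGreatest (fun k => n k ≤ m) m with hkdef
  have h1 : n k ≤ m := Nat.findGreatest_spec (P := fun i => n i ≤ m) hKm hm
  have hKk : Kmax ≤ k := Nat.le_findGreatest (P := fun i => n i ≤ m) hKm hm
  have h2 : m < n (k + 1) := by
    by_contra hc
    push_neg at hc
    have : k + 1 ≤ k :=
      Nat.le_findGreatest (P := fun i => n i ≤ m) (le_trans hmono.le_apply hc) hc
    omega
  obtain ⟨j, hj, hjM⟩ : ∃ j, m = j + n k ∧ j ≤ M := by
    refine ⟨m - n k, by omega, ?_⟩
    have := hM k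
    omega
  rw [dist_eq_norm, sub_zero, hj, pow_add]
  have hKle : K j ≤ k :=
    le_trans (Finset.le_sup (Finset.mem_range.2 (Nat.lt_succ_of_le hjM))) hKk
  exact hK j k hKle
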